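/- Let m, ℓ ∈ ℕ and 0 ≤ q ≤ 1. Suppose d, d⁰ : ({-1,0,1}^m) → ℝ satisfy |d_ω| ≤ q^{|ω|}·|d⁰_ω| for every frequency vector ω, and Σ_ω 2^{-|ω|} (d⁰_ω)² ≤ 1. Define f(θ) = Σ_ω d_ω Φ_ω(θ) and g(θ) = Σ_{|ω| ≤ ℓ} d_ω Φ_ω(θ). Then Δ(f,g) ≤ q^{ℓ+1}. -/

import Mathlib

open MeasureTheory Finset

/-- The trigonometric monomial factor: `φ₀ = 1`, `φ₁ = cos`, `φ₋₁ = sin`. -/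
noncomputable def phi (w : ℤ) (x : ℝ) : ℝ :=
  if w = 1 then Real.cos x else if w = -1 then Real.sin x else 1

/-- The multivariate trigonometric monomial `Φ_ω(θ) = ∏ i, φ_{ω i}(θ i)`. -/
noncomputable def Phi {m : ℕ} (ω : Fin m → ℤ) (θ : Fin m → ℝ) : ℝ :=
  ∏ i, phi (ω i) (θ i)

/-- The weight `|ω|` of a frequency vector: the number of nonzero entries. -/
def wt {m : ℕ} (ω : Fin m → ℤ) : ℕ := (Finset.univ.filter fun i => ω i ≠ 0).card

/-- The finite set of all frequency vectors `ω ∈ {-1,0,1}^m`. -/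
def freqSet (m : ℕ) : Finset (Fin m → ℤ) :=
  Fintype.piFinset fun _ => ({-1, 0, 1} : Finset ℤ)

/-- The mean of a function over the cube `[0, 2π]^m`. -/
noncomputable def cubeMean (m : ℕ) (h : (Fin m → ℝ) → ℝ) : ℝ :=
  ((2 * Real.pi) ^ m)⁻¹ *
    ∫ θ in Set.Icc (0 : Fin m → ℝ) (fun _ => 2 * Real.pi), h θ

/-- The average `L²` distance `Δ(f,g)` over the parameter cube `[0, 2π]^m`. -/
noncomputable def Delta (m : ℕ) (f g : (Fin m → ℝ) → ℝ) : ℝ :=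
  Real.sqrt (cubeMean m fun θ => (f θ - g θ) ^ 2)

lemma continuous_phi (w : ℤ) : Continuous (phi w) := by
  unfold phi
  split_ifs <;> first | exact Real.continuous_cos | exact Real.continuous_sin |
    exact continuous_const

lemma continuous_Phi {m : ℕ} (ω : Fin m → ℤ) : Continuous (Phi ω) := by
  unfold Phi
  exact continuous_finset_prod _ fun i _ => (continuous_phi (ω i)).comp (continuous_apply i)

lemma box_integral {m : ℕ} (f : Fin m → ℝ → ℝ) (hf : ∀ i, Continuous (f i)) :
    ∫ θ in Set.Icc (0 : Fin m → ℝ) (fun _ => 2 * Real.pi), ∏ i, f i (θ i)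
      = ∏ i, ∫ x in Set.Icc (0 : ℝ) (2 * Real.pi), f i x := by
  rw [← integral_indicator measurableSet_Icc]
  have key : ∀ θ : Fin m → ℝ,
      (Set.Icc (0 : Fin m → ℝ) (fun _ => 2 * Real.pi)).indicator
        (fun θ => ∏ i, f i (θ i)) θ
      = ∏ i, (Set.Icc (0:ℝ) (2 * Real.pi)).indicator (f i) (θ i) := by
    intro θ
    by_cases h : θ ∈ Set.Icc (0 : Fin m → ℝ) (fun _ => 2 * Real.pi)
    · rw [Set.indicator_of_mem h]
      exact Finset.prod_congr rfl fun i _ =>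
        (Set.indicator_of_mem (Set.mem_Icc.mpr ⟨h.1 i, h.2 i⟩) (f i)).symm
    · rw [Set.indicator_of_notMem h]
      have hex : ∃ i, θ i ∉ Set.Icc (0:ℝ) (2 * Real.pi) := by
        by_contra hc
        push_neg at hc
        exact h ⟨fun i => (Set.mem_Icc.mp (hc i)).1, fun i => (Set.mem_Icc.mp (hc i)).2⟩
      obtain ⟨i, hi⟩ := hex
      exact (Finset.prod_eq_zero (Finset.mem_univ i)
        (Set.indicator_of_notMem hi (f i))).symm
  simp_rw [key]
  rw [MeasureTheory.integral_fintype_prod_volume_eq_prod (𝕜 := ℝ)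
    (f := fun i x => (Set.Icc (0:ℝ) (2 * Real.pi)).indicator (f i) x)]
  exact Finset.prod_congr rfl fun i _ => by rw [integral_indicator measurableSet_Icc]

lemma one_dim (a b : ℤ) (ha : a = -1 ∨ a = 0 ∨ a = 1) (hb : b = -1 ∨ b = 0 ∨ b = 1) :
    ∫ x in Set.Icc (0 : ℝ) (2 * Real.pi), phi a x * phi b x
      = if a = b then (if a = 0 then 2 * Real.pi else Real.pi) else 0 := by
  have h2 : (0:ℝ) ≤ 2 * Real.pi := by positivity
  rw [MeasureTheory.integral_Icc_eq_integral_Ioc,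
    ← intervalIntegral.integral_of_le h2]
  have hs : ∀ x : ℝ, phi (-1) x = Real.sin x := fun x => by norm_num [phi]
  have hc : ∀ x : ℝ, phi 1 x = Real.cos x := fun x => by norm_num [phi]
  have h0 : ∀ x : ℝ, phi 0 x = 1 := fun x => by norm_num [phi]
  rcases ha with ha | ha | ha <;> rcases hb with hb | hb | hb <;>
    subst ha <;> subst hb <;>
    simp only [hs, hc, h0, one_mul, mul_one, ← pow_two, mul_comm (Real.cos _) (Real.sin _),
      integral_sin_sq, integral_cos_sq, integral_sin_mul_cos₁, integral_sin, integral_cos,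
      intervalIntegral.integral_const, Real.sin_two_pi, Real.cos_two_pi, Real.sin_zero,
      Real.cos_zero, smul_eq_mul] <;>
    norm_num

lemma mem_freq {m : ℕ} {ω : Fin m → ℤ} (h : ω ∈ freqSet m) (i : Fin m) :
    ω i = -1 ∨ ω i = 0 ∨ ω i = 1 := by
  have := Fintype.mem_piFinset.mp h i
  simpa using this

lemma orth {m : ℕ} {ω ω' : Fin m → ℤ} (hω : ω ∈ freqSet m) (hω' : ω' ∈ freqSet m) :
    cubeMean m (fun θ => Phi ω θ * Phi ω' θ)
      = if ω = ω' then ((2:ℝ) ^ wt ω)⁻¹ else 0 := by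
  have hpi : (0:ℝ) < 2 * Real.pi := by positivity
  have : cubeMean m (fun θ => Phi ω θ * Phi ω' θ)
      = ∏ i, ((2 * Real.pi)⁻¹ * ∫ x in Set.Icc (0:ℝ) (2 * Real.pi),
          phi (ω i) x * phi (ω' i) x) := by
    unfold cubeMean
    have : ∀ θ : Fin m → ℝ, Phi ω θ * Phi ω' θ = ∏ i, (phi (ω i) (θ i) * phi (ω' i) (θ i)) := by
      intro θ; rw [Phi, Phi, ← Finset.prod_mul_distrib]
    simp_rw [this]
    rw [box_integral (fun i x => phi (ω i) x * phi (ω' i) x) (fun i => (continuous_phi _).mul (continuous_phi _)),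
      Finset.prod_mul_distrib, Finset.prod_const, Finset.card_univ, Fintype.card_fin, inv_pow]
  rw [this]
  by_cases h : ω = ω'
  · subst h
    simp only [if_pos rfl]
    have : ∀ i, ((2 * Real.pi)⁻¹ * ∫ x in Set.Icc (0:ℝ) (2 * Real.pi),
        phi (ω i) x * phi (ω i) x) = if ω i = 0 then 1 else (2:ℝ)⁻¹ := by
      intro i
      rw [one_dim _ _ (mem_freq hω i) (mem_freq hω i), if_pos rfl]
      split_ifs
      · field_simp
      · rw [show (2 : ℝ) * Real.pi = Real.pi * 2 by ring, mul_inv]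
        field_simp
    simp_rw [this]
    rw [Finset.prod_ite, Finset.prod_const, Finset.prod_const, one_pow, one_mul, ← inv_pow]
    rfl
  · rw [if_neg h]
    obtain ⟨i, hi⟩ := Function.ne_iff.mp h
    refine Finset.prod_eq_zero (Finset.mem_univ i) ?_
    rw [one_dim _ _ (mem_freq hω i) (mem_freq hω' i), if_neg hi, mul_zero]

lemma cubeMean_sum {α : Type*} {m : ℕ} (s : Finset α) (F : α → (Fin m → ℝ) → ℝ)
    (hF : ∀ a ∈ s, Continuous (F a)) :
    cubeMean m (fun θ => ∑ a ∈ s, F a θ) = ∑ a ∈ s, cubeMean m (F a) := by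
  unfold cubeMean
  rw [MeasureTheory.integral_finset_sum s
    (fun a ha => (hF a ha).continuousOn.integrableOn_compact isCompact_Icc), Finset.mul_sum]

lemma cubeMean_const_mul {m : ℕ} (c : ℝ) (h : (Fin m → ℝ) → ℝ) :
    cubeMean m (fun θ => c * h θ) = c * cubeMean m h := by
  unfold cubeMean
  rw [integral_const_mul]
  ring

theorem stmt3 (m ℓ : ℕ) (q : ℝ) (hq0 : 0 ≤ q) (hq1 : q ≤ 1)
    (d d0 : (Fin m → ℤ) → ℝ)
    (hd : ∀ ω ∈ freqSet m, |d ω| ≤ q ^ wt ω * |d0 ω|)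
    (hd0 : ∑ ω ∈ freqSet m, ((2 : ℝ) ^ wt ω)⁻¹ * d0 ω ^ 2 ≤ 1) :
    Delta m (fun θ => ∑ ω ∈ freqSet m, d ω * Phi ω θ)
        (fun θ => ∑ ω ∈ (freqSet m).filter (fun ω => wt ω ≤ ℓ), d ω * Phi ω θ) ≤
      q ^ (ℓ + 1) := by
  set T := (freqSet m).filter (fun ω => ¬ wt ω ≤ ℓ) with hT
  have hTsub : T ⊆ freqSet m := Finset.filter_subset _ _
  -- rewrite the difference as a single sum
  have hdiff : ∀ θ : Fin m → ℝ,
      (∑ ω ∈ freqSet m, d ω * Phi ω θ)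
        - (∑ ω ∈ (freqSet m).filter (fun ω => wt ω ≤ ℓ), d ω * Phi ω θ)
      = ∑ ω ∈ T, d ω * Phi ω θ := by
    intro θ
    rw [sub_eq_iff_eq_add, hT, add_comm]
    exact (Finset.sum_filter_add_sum_filter_not (freqSet m) (fun ω => wt ω ≤ ℓ) _).symm
  -- compute the mean square
  have key : cubeMean m (fun θ => (∑ ω ∈ T, d ω * Phi ω θ) ^ 2)
      = ∑ ω ∈ T, d ω ^ 2 * ((2:ℝ) ^ wt ω)⁻¹ := by
    have expand : ∀ θ : Fin m → ℝ, (∑ ω ∈ T, d ω * Phi ω θ) ^ 2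
        = ∑ ω ∈ T, ∑ ω' ∈ T, (d ω * d ω') * (Phi ω θ * Phi ω' θ) := by
      intro θ
      rw [sq, Finset.sum_mul_sum]
      exact Finset.sum_congr rfl fun ω _ => Finset.sum_congr rfl fun ω' _ => by ring
    simp_rw [expand]
    rw [cubeMean_sum _ (fun ω θ => ∑ ω' ∈ T, (d ω * d ω') * (Phi ω θ * Phi ω' θ)) (fun ω _ => continuous_finset_sum _ fun ω' _ =>
      continuous_const.mul ((continuous_Phi ω).mul (continuous_Phi ω')))]
    have inner : ∀ ω ∈ T,
        cubeMean m (fun θ => ∑ ω' ∈ T, (d ω * d ω') * (Phi ω θ * Phi ω' θ))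
        = d ω ^ 2 * ((2:ℝ) ^ wt ω)⁻¹ := by
      intro ω hω
      rw [cubeMean_sum _ (fun ω' θ => (d ω * d ω') * (Phi ω θ * Phi ω' θ)) (fun ω' _ =>
        continuous_const.mul ((continuous_Phi ω).mul (continuous_Phi ω')))]
      have : ∀ ω' ∈ T, cubeMean m (fun θ => (d ω * d ω') * (Phi ω θ * Phi ω' θ))
          = (d ω * d ω') * (if ω = ω' then ((2:ℝ) ^ wt ω)⁻¹ else 0) := by
        intro ω' hω'
        rw [cubeMean_const_mul, orth (hTsub hω) (hTsub hω')]
      rw [Finset.sum_congr rfl this]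
      simp [Finset.sum_ite_eq, hω, sq]
    exact Finset.sum_congr rfl inner
  -- bound the coefficients
  have hbound : ∑ ω ∈ T, d ω ^ 2 * ((2:ℝ) ^ wt ω)⁻¹ ≤ (q ^ (ℓ + 1)) ^ 2 := by
    have step : ∀ ω ∈ T, d ω ^ 2 * ((2:ℝ) ^ wt ω)⁻¹
        ≤ (q ^ (ℓ + 1)) ^ 2 * (((2:ℝ) ^ wt ω)⁻¹ * d0 ω ^ 2) := by
      intro ω hω
      have hwt : ℓ + 1 ≤ wt ω := by
        have := (Finset.mem_filter.mp hω).2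
        omega
      have h1 : |d ω| ≤ q ^ (ℓ + 1) * |d0 ω| := by
        refine (hd ω (hTsub hω)).trans (mul_le_mul_of_nonneg_right ?_ (abs_nonneg _))
        exact pow_le_pow_of_le_one hq0 hq1 hwt
      have h2 : d ω ^ 2 ≤ (q ^ (ℓ + 1)) ^ 2 * d0 ω ^ 2 := by
        rw [← mul_pow]
        calc d ω ^ 2 = |d ω| ^ 2 := (sq_abs _).symm
          _ ≤ (q ^ (ℓ + 1) * |d0 ω|) ^ 2 := by
              exact pow_le_pow_left₀ (abs_nonneg _) h1 2
          _ = (q ^ (ℓ + 1) * d0 ω) ^ 2 := by rw [mul_pow, mul_pow, sq_abs]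
      calc d ω ^ 2 * ((2:ℝ) ^ wt ω)⁻¹
          ≤ ((q ^ (ℓ + 1)) ^ 2 * d0 ω ^ 2) * ((2:ℝ) ^ wt ω)⁻¹ := by
            exact mul_le_mul_of_nonneg_right h2 (by positivity)
        _ = (q ^ (ℓ + 1)) ^ 2 * (((2:ℝ) ^ wt ω)⁻¹ * d0 ω ^ 2) := by ring
    calc ∑ ω ∈ T, d ω ^ 2 * ((2:ℝ) ^ wt ω)⁻¹
        ≤ ∑ ω ∈ T, (q ^ (ℓ + 1)) ^ 2 * (((2:ℝ) ^ wt ω)⁻¹ * d0 ω ^ 2) :=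
          Finset.sum_le_sum step
      _ = (q ^ (ℓ + 1)) ^ 2 * ∑ ω ∈ T, ((2:ℝ) ^ wt ω)⁻¹ * d0 ω ^ 2 := by
          rw [Finset.mul_sum]
      _ ≤ (q ^ (ℓ + 1)) ^ 2 * 1 := by
          refine mul_le_mul_of_nonneg_left ?_ (by positivity)
          refine le_trans (Finset.sum_le_sum_of_subset_of_nonneg hTsub
            (fun ω _ _ => by positivity)) hd0
      _ = (q ^ (ℓ + 1)) ^ 2 := mul_one _
  -- conclude
  unfold Delta
  have heq : (cubeMean m fun θ =>
      ((∑ ω ∈ freqSet m, d ω * Phi ω θ)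
        - ∑ ω ∈ (freqSet m).filter (fun ω => wt ω ≤ ℓ), d ω * Phi ω θ) ^ 2)
      = ∑ ω ∈ T, d ω ^ 2 * ((2:ℝ) ^ wt ω)⁻¹ := by
    rw [← key]
    congr 1
    funext θ
    rw [hdiff θ]
  rw [heq]
  calc Real.sqrt (∑ ω ∈ T, d ω ^ 2 * ((2:ℝ) ^ wt ω)⁻¹)
      ≤ Real.sqrt ((q ^ (ℓ + 1)) ^ 2) := Real.sqrt_le_sqrt hbound
    _ = q ^ (ℓ + 1) := Real.sqrt_sq (pow_nonneg hq0 _)
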